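/- Let G' = G − (x, y) where x is reachable in G and y remains reachable in G'. If the dominator trees differ (D' ≠ D) and (d(y), y) is not an edge of G, then there exist edges (u, y) and (w, y) of G entering y with sp_D(u, y) ≠ sp_D(w, y). -/

import Mathlib

variable {V : Type*}

/-- `p` is a path (walk) in the digraph `E` from `a` to `b`, given as its list of vertices. -/
def IsPath (E : V → V → Prop) (a b : V) (p : List V) : Prop :=
  p.Chain' E ∧ p.head? = some a ∧ p.getLast? = some b

/-- `v` is reachable from `s` in the digraph `E`. -/
def Reach (E : V → V → Prop) (s v : V) : Prop := ∃ p, IsPath E s v p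

/-- `w` dominates `v` in the flow graph `(E, s)`. -/
def Dom (E : V → V → Prop) (s w v : V) : Prop :=
  Reach E s v ∧ ∀ p, IsPath E s v p → w ∈ p

/-- `dv` is the immediate dominator of `v`: `dv ≠ v`, `dv` dominates `v`, and every
proper dominator of `v` dominates `dv`. -/
def IsIdom (E : V → V → Prop) (s dv v : V) : Prop :=
  dv ≠ v ∧ Dom E s dv v ∧ ∀ u, Dom E s u v → u ≠ v → Dom E s u dv

/-- `u` is an ancestor of `w` in the tree given by parent function `parent` (reflexive). -/
def Anc (parent : V → V) (u w : V) : Prop := ∃ k, parent^[k] w = u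

/-- The tree with parent function `t` has the parent property for flow graph `(E, s)`. -/
def ParentProp (E : V → V → Prop) (s : V) (t : V → V) : Prop :=
  ∀ v w, E v w → Reach E s v → Anc t (t w) v

/-- The tree with parent function `t` has the sibling property for flow graph `(E, s)`. -/
def SiblingProp (E : V → V → Prop) (s : V) (t : V → V) : Prop :=
  ∀ v w, Reach E s v → Reach E s w → v ≠ s → w ≠ s → t v = t w → v ≠ w → ¬ Dom E s v w

/-- `t` is (the parent function of) a tree rooted at `s` on the reachable vertices. -/
def IsRootedTree (E : V → V → Prop) (s : V) (t : V → V) : Prop :=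
  t s = s ∧ ∀ v, Reach E s v → (v ≠ s → Reach E s (t v)) ∧ ∃ k, t^[k] v = s

/-- `c` is the support `sp_D(v, w)` of the edge `(v, w)` with respect to the dominator
tree with parent function `d`: it is `v` itself if `v = d w`, and otherwise the child
of `d w` that is an ancestor of `v`. -/
def IsSupport (E : V → V → Prop) (s : V) (d : V → V) (v w c : V) : Prop :=
  (v = d w ∧ c = v) ∨
  (v ≠ d w ∧ Reach E s c ∧ c ≠ s ∧ d c = d w ∧ Anc d c v)

section Aux

variable {E E' : V → V → Prop} {s a b v w : V} {p : List V}

lemma path_mono (h : ∀ a b, E a b → E' a b) (hp : IsPath E a b p) : IsPath E' a b p :=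
  ⟨hp.1.imp h, hp.2⟩

lemma reach_mono (h : ∀ a b, E a b → E' a b) (hr : Reach E a b) : Reach E' a b :=
  hr.imp fun _ hp => path_mono h hp

lemma path_singleton : IsPath E s s [s] := ⟨List.isChain_singleton s, rfl, rfl⟩

lemma reach_self : Reach E s s := ⟨[s], path_singleton⟩

lemma path_ne_nil (hp : IsPath E a b p) : p ≠ [] := by
  rintro rfl; simp [IsPath] at hp

lemma last_mem (hp : IsPath E a b p) : b ∈ p := by
  have h := hp.2.2
  rw [List.getLast?_eq_getLast (path_ne_nil hp), Option.some_inj] at h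
  exact h ▸ List.getLast_mem _

lemma first_split (h : w ∈ p) : ∃ l r, p = l ++ w :: r ∧ w ∉ l := by
  induction p with
  | nil => cases h
  | cons x t ih =>
    by_cases hw : w = x
    · exact ⟨[], t, by simp [hw], by simp⟩
    · obtain ⟨l, r, rfl, hl⟩ := ih ((List.mem_cons.mp h).resolve_left hw)
      exact ⟨x :: l, r, rfl, by simp [hl, hw]⟩

lemma prefix_path {l r : List V} (hp : IsPath E s v (l ++ w :: r)) :
    IsPath E s w (l ++ [w]) := by
  obtain ⟨hc, hh, -⟩ := hp
  rw [show l ++ w :: r = (l ++ [w]) ++ r by simp] at hc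
  refine ⟨(List.isChain_append.mp hc).1, ?_, by simp⟩
  cases l with
  | nil => simpa using hh
  | cons a t => simpa using hh

lemma mem_reach (hp : IsPath E s v p) (h : w ∈ p) : Reach E s w := by
  obtain ⟨l, r, rfl, -⟩ := first_split h
  exact ⟨l ++ [w], prefix_path hp⟩

lemma dom_reach (h : Dom E s w v) : Reach E s w := by
  obtain ⟨p, hp⟩ := h.1
  exact mem_reach hp (h.2 p hp)

lemma dom_refl (h : Reach E s v) : Dom E s v v :=
  ⟨h, fun _ hp => last_mem hp⟩

lemma dom_s (h : Dom E s w s) : w = s := by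
  have := h.2 [s] path_singleton
  simpa using this

lemma dom_trans {c : V} (hab : Dom E s a b) (hbc : Dom E s b c) : Dom E s a c := by
  refine ⟨hbc.1, fun p hp => ?_⟩
  obtain ⟨l, r, rfl, -⟩ := first_split (hbc.2 p hp)
  have hpre : IsPath E s b (l ++ [b]) := prefix_path hp
  have := hab.2 _ hpre
  rcases List.mem_append.mp this with h | h
  · exact List.mem_append.mpr (Or.inl h)
  · simp at h; subst h; simp

lemma path_snoc {u : V} (hp : IsPath E a u p) (he : E u b) : IsPath E a b (p ++ [b]) := by
  obtain ⟨hc, hh, hl⟩ := hp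
  refine ⟨List.isChain_append.mpr ⟨hc, List.isChain_singleton _, ?_⟩, ?_, by simp⟩
  · intro x hx y hy
    simp only [List.head?_cons, Option.mem_def, Option.some_inj] at hy
    rw [hl] at hx; simp at hx; subst hx; subst hy; exact he
  · rw [List.head?_append_of_ne_nil _ (path_ne_nil ⟨hc, hh, hl⟩), hh]

end Aux

section Aux2
variable {E E' : V → V → Prop} {s a b v w x y : V} {p : List V}

lemma dom_antisymm (hab : Dom E s a b) (hba : Dom E s b a) : a = b := by
  by_contra hne
  obtain ⟨p0, hp0⟩ := hab.1
  have key : ∀ n p, IsPath E s b p → p.length ≤ n → False := by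
    intro n
    induction n with
    | zero => intro p hp hl; have := path_ne_nil hp; simp [List.length_eq_zero_iff.mp (Nat.le_zero.mp hl)] at this
    | succ m ih =>
      intro p hp hl
      obtain ⟨l, r, rfl, hal⟩ := first_split (hab.2 p hp)
      have hq : IsPath E s a (l ++ [a]) := prefix_path hp
      have hbq := hba.2 _ hq
      have hbl : b ∈ l := by
        rcases List.mem_append.mp hbq with h | h
        · exact h
        · simp at h; exact absurd h.symm hne
      obtain ⟨l1, r1, rfl, -⟩ := first_split hbl
      have hq' : IsPath E s b (l1 ++ [b]) := by
        have : (l1 ++ b :: r1) ++ [a] = l1 ++ b :: (r1 ++ [a]) := by simp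
        rw [this] at hq
        exact prefix_path hq
      apply ih _ hq'
      simp only [List.length_append, List.length_cons, List.length_nil,
        List.length_singleton] at hl ⊢
      omega
  exact key p0.length p0 hp0 le_rfl

lemma idom_unique (ha : IsIdom E s a v) (hb : IsIdom E s b v) : a = b :=
  dom_antisymm (hb.2.2 a ha.2.1 ha.1) (ha.2.2 b hb.2.1 hb.1)

/-- decompose a path to `y ≠ s` at the first occurrence of `y`. -/
lemma pred_split (hp : IsPath E s y p) (hys : y ≠ s) :
    ∃ q u, IsPath E s u q ∧ E u y ∧ y ∉ q ∧ ∀ z ∈ q, z ∈ p := by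
  obtain ⟨l, r, rfl, hyl⟩ := first_split (last_mem hp)
  have hlne : l ≠ [] := by
    rintro rfl
    have := hp.2.1; simp at this; exact hys this
  obtain ⟨hc, hh, -⟩ := hp
  have hcs : List.Chain' E (l ++ [y] ++ r) := by simpa using hc
  obtain ⟨hcl, -, hjun⟩ := List.isChain_append.mp ((by simpa [List.append_assoc] using hc) :
      List.Chain' E (l ++ (y :: r)))
  refine ⟨l, l.getLast hlne, ⟨hcl, ?_, List.getLast?_eq_getLast hlne⟩, ?_, hyl, ?_⟩
  · rw [List.head?_append_of_ne_nil _ hlne] at hh; exact hh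
  · exact hjun _ (by rw [List.getLast?_eq_getLast hlne]; rfl) y rfl
  · intro z hz; simp [hz]

lemma path_rtg {p : List V} : ∀ {a b : V}, IsPath E a b p → Relation.ReflTransGen E a b := by
  induction p with
  | nil => intro a b hp; exact absurd rfl (path_ne_nil hp)
  | cons c t ih =>
    intro a b hp
    obtain ⟨hc, hh, hl⟩ := hp
    simp only [List.head?_cons, Option.some_inj] at hh
    subst hh
    cases t with
    | nil =>
      simp only [List.getLast?_singleton, Option.some_inj] at hl
      exact hl ▸ Relation.ReflTransGen.refl
    | cons c2 t2 =>
      have h1 : E c c2 := (List.isChain_cons_cons.mp hc).1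
      have h2 : IsPath E c2 b (c2 :: t2) :=
        ⟨(List.isChain_cons_cons.mp hc).2, rfl, by simpa using hl⟩
      exact Relation.ReflTransGen.head h1 (ih h2)

lemma reach_iff_rtg : Reach E s v ↔ Relation.ReflTransGen E s v := by
  constructor
  · rintro ⟨p, hp⟩
    exact path_rtg hp
  · intro h
    induction h with
    | refl => exact reach_self
    | tail _ he ih => obtain ⟨p, hp⟩ := ih; exact ⟨p ++ [_], path_snoc hp he⟩

/-- if every `E`-path edge is an `E'` edge except possibly `(x,y)`, and `y` is
`E'`-reachable, then `E`-reachability implies `E'`-reachability. -/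
lemma reach_del (hy : Reach (fun p q => E p q ∧ ¬ (p = x ∧ q = y)) s y)
    (h : Reach E s v) : Reach (fun p q => E p q ∧ ¬ (p = x ∧ q = y)) s v := by
  rw [reach_iff_rtg] at h ⊢
  rw [reach_iff_rtg] at hy
  induction h with
  | refl => rfl
  | @tail b c _ he ih =>
    by_cases hxy : b = x ∧ c = y
    · exact hxy.2 ▸ hy
    · exact Relation.ReflTransGen.tail ih ⟨he, hxy⟩

lemma chain'_split (hc : List.Chain' E p) (hc' : ¬ List.Chain' (fun p q => E p q ∧ ¬ (p = x ∧ q = y)) p) :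
    ∃ l r, p = l ++ x :: y :: r := by
  induction p with
  | nil => exact absurd List.isChain_nil hc'
  | cons c t ih =>
    cases t with
    | nil => exact absurd (List.isChain_singleton c) hc'
    | cons c2 t2 =>
      obtain ⟨h1, h2⟩ := List.isChain_cons_cons.mp hc
      by_cases hE' : (c = x ∧ c2 = y)
      · exact ⟨[], t2, by simp [hE'.1, hE'.2]⟩
      · have : ¬ List.Chain' (fun p q => E p q ∧ ¬ (p = x ∧ q = y)) (c2 :: t2) := by
          intro hcc; exact hc' (List.isChain_cons_cons.mpr ⟨⟨h1, hE'⟩, hcc⟩)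
        obtain ⟨l, r, hl⟩ := ih h2 this
        exact ⟨c :: l, r, by rw [hl]; rfl⟩

end Aux2

section Aux3
variable {E : V → V → Prop} {s v w x y : V} {d : V → V}

lemma sup_exists (hd : ∀ u, Reach E s u → u ≠ s → IsIdom E s (d u) u)
    (hnoedge : ¬ E (d y) y) (hyr : Reach E s y) (hys : y ≠ s) :
    ∀ u, Reach E s u → E u y →
      ∃ c, Reach E s c ∧ c ≠ s ∧ d c = d y ∧ Anc d c u ∧ Dom E s c u := by
  have dom_dy : ∀ u, Reach E s u → E u y → Dom E s (d y) u := by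
    intro u hu he
    refine ⟨hu, fun p hp => ?_⟩
    have hpy : IsPath E s y (p ++ [y]) := path_snoc hp he
    have hmem := (hd y hyr hys).2.1.2 _ hpy
    rcases List.mem_append.mp hmem with h | h
    · exact h
    · simp at h; exact absurd h (hd y hyr hys).1
  have main : ∀ n u, (∃ p, IsPath E s u p ∧ p.length ≤ n) → Dom E s (d y) u → u ≠ d y →
      ∃ c, Reach E s c ∧ c ≠ s ∧ d c = d y ∧ Anc d c u ∧ Dom E s c u := by
    intro n
    induction n with
    | zero =>
      rintro u ⟨p, hp, hl⟩ - -
      have := path_ne_nil hp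
      simp [List.length_eq_zero_iff.mp (Nat.le_zero.mp hl)] at this
    | succ m ih =>
      rintro u ⟨p, hp, hl⟩ hdom hne
      have hus : u ≠ s := by
        rintro rfl
        exact hne (dom_s hdom).symm
      have hur : Reach E s u := ⟨p, hp⟩
      have hidu := hd u hur hus
      by_cases hcase : d u = d y
      · exact ⟨u, hur, hus, hcase, ⟨0, rfl⟩, dom_refl hur⟩
      · have hdyu : Dom E s (d y) (d u) := hidu.2.2 (d y) hdom (Ne.symm hne)
        have hdup : d u ∈ p := hidu.2.1.2 p hp
        obtain ⟨l, r, rfl, -⟩ := first_split hdup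
        have hqp : IsPath E s (d u) (l ++ [d u]) := prefix_path hp
        have hrne : r ≠ [] := by
          rintro rfl
          have h1 := hp.2.2
          have h2 : (l ++ [d u]).getLast? = some (d u) := by simp
          rw [h1] at h2
          exact hidu.1 (Option.some_inj.mp h2).symm
        have hlen : (l ++ [d u]).length ≤ m := by
          rcases r with - | ⟨r0, rt⟩
          · exact absurd rfl hrne
          · simp only [List.length_append, List.length_cons, List.length_nil,
              List.length_singleton] at hl ⊢
            omega
        obtain ⟨c, hcr, hcs, hcd, ⟨k, hk⟩, hcdom⟩ := ih (d u) ⟨_, hqp, hlen⟩ hdyu hcase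
        refine ⟨c, hcr, hcs, hcd, ⟨k + 1, ?_⟩, dom_trans hcdom hidu.2.1⟩
        rw [Function.iterate_succ_apply, hk]
  intro u hu he
  obtain ⟨p, hp⟩ := hu
  exact main p.length u ⟨p, hp, le_rfl⟩ (dom_dy u ⟨p, hp⟩ he)
    (fun h => hnoedge (h ▸ he))

lemma dom_del_iff_s {x w v : V} :
    Dom (fun p q => E p q ∧ ¬ (p = x ∧ q = s)) s w v ↔ Dom E s w v := by
  constructor
  · intro h
    have hv : Reach E s v := reach_mono (fun a b hb => hb.1) h.1
    refine ⟨hv, fun p hp => ?_⟩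
    have key : ∀ n p, IsPath E s v p → p.length ≤ n → w ∈ p := by
      intro n
      induction n with
      | zero =>
        rintro p hp hl
        have := path_ne_nil hp
        simp [List.length_eq_zero_iff.mp (Nat.le_zero.mp hl)] at this
      | succ m ih =>
        intro p hp hl
        by_cases hc : List.Chain' (fun p q => E p q ∧ ¬ (p = x ∧ q = s)) p
        · exact h.2 p ⟨hc, hp.2⟩
        · obtain ⟨l, r, hpr⟩ := chain'_split hp.1 hc
          have hshape : p = (l ++ [x]) ++ (s :: r) := by rw [hpr]; simp
          have hsr : IsPath E s v (s :: r) := by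
            refine ⟨?_, rfl, ?_⟩
            · have := hp.1
              rw [hshape] at this
              exact (List.isChain_append.mp this).2.1
            · rw [← hp.2.2, hshape, List.getLast?_append_of_ne_nil _ (by simp)]
          have hwm := ih (s :: r) hsr (by rw [hshape] at hl; simp at hl ⊢; omega)
          rw [hshape]
          exact List.mem_append.mpr (Or.inr hwm)
    obtain ⟨pp, hpp⟩ := hv
    exact key p.length p hp le_rfl
  · intro h
    exact ⟨reach_del reach_self h.1, fun p hp => h.2 p (path_mono (fun a b hb => hb.1) hp)⟩

end Aux3

/-- If deleting edge `(x, y)` (with `x` and `y` still reachable afterwards) changes the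
dominator tree and `(d y, y)` is not an edge of `G`, then there exist edges `(u, y)` and
`(w, y)` of `G` with different supports with respect to the dominator tree of `G`. -/
theorem deletion_support_condition (E : V → V → Prop) (s x y : V)
    (d d' : V → V)
    (hd : ∀ u, Reach E s u → u ≠ s → IsIdom E s (d u) u)
    (hd' : ∀ u, Reach (fun p q => E p q ∧ ¬ (p = x ∧ q = y)) s u → u ≠ s →
      IsIdom (fun p q => E p q ∧ ¬ (p = x ∧ q = y)) s (d' u) u)
    (hx : Reach (fun p q => E p q ∧ ¬ (p = x ∧ q = y)) s x)
    (hy : Reach (fun p q => E p q ∧ ¬ (p = x ∧ q = y)) s y)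
    (hdiff : (∃ v, Reach E s v ∧ ¬ Reach (fun p q => E p q ∧ ¬ (p = x ∧ q = y)) s v) ∨
      (∃ v, Reach (fun p q => E p q ∧ ¬ (p = x ∧ q = y)) s v ∧ v ≠ s ∧ d' v ≠ d v))
    (hnoedge : ¬ E (d y) y) :
    ∃ u w, E u y ∧ E w y ∧
      ∃ cu cw, IsSupport E s d u y cu ∧ IsSupport E s d w y cw ∧ cu ≠ cw := by
  classical
  by_contra hcon
  push_neg at hcon
  by_cases hys : y = s
  · -- degenerate case: the deleted edge enters the start vertex, so nothing changes
    subst y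
    rcases hdiff with ⟨v, hv, hnv⟩ | ⟨v, hv, hvs, hne⟩
    · exact hnv (reach_del hy hv)
    · have hvE : Reach E s v := reach_mono (fun a b hb => hb.1) hv
      have h1 := hd v hvE hvs
      have h2 := hd' v hv hvs
      have h2' : IsIdom E s (d' v) v :=
        ⟨h2.1, dom_del_iff_s.mp h2.2.1,
          fun u hu hne2 => dom_del_iff_s.mp (h2.2.2 u (dom_del_iff_s.mpr hu) hne2)⟩
      exact hne (idom_unique h2' h1)
  · -- main case: y ≠ s
    have hyr : Reach E s y := reach_mono (fun a b hb => hb.1) hy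
    have hsup := sup_exists hd hnoedge hyr hys
    obtain ⟨p, hp⟩ := hyr
    obtain ⟨q, u, hq, hu, hynq, hqsub⟩ := pred_split hp hys
    obtain ⟨c, hcr, hcs, hcd, hcanc, hcdom⟩ := hsup u ⟨q, hq⟩ hu
    have hSc : IsSupport E s d u y c :=
      Or.inr ⟨fun h => hnoedge (h ▸ hu), hcr, hcs, hcd, hcanc⟩
    -- the common support dominates every path to y
    have hcall : ∀ p', IsPath E s y p' → c ∈ p' := by
      intro p' hp'
      obtain ⟨q', u', hq', hu', -, hsub'⟩ := pred_split hp' hys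
      obtain ⟨c', hcr', hcs', hcd', hcanc', hcdom'⟩ := hsup u' ⟨q', hq'⟩ hu'
      have hSc' : IsSupport E s d u' y c' :=
        Or.inr ⟨fun h => hnoedge (h ▸ hu'), hcr', hcs', hcd', hcanc'⟩
      have hcc : c' = c := hcon u' u hu' hu c' c hSc' hSc
      rw [hcc] at hcdom'
      exact hsub' _ (hcdom'.2 q' hq')
    have hcy : Dom E s c y := ⟨⟨p, hp⟩, hcall⟩
    by_cases hceqy : c = y
    · rw [hceqy] at hcdom
      exact hynq (hcdom.2 q hq)
    · have hidy := hd y ⟨p, hp⟩ hys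
      have h1 : Dom E s c (d y) := hidy.2.2 c hcy hceqy
      have hidc := hd c hcr hcs
      have h2 : Dom E s (d y) c := hcd ▸ hidc.2.1
      exact hidc.1 (hcd.trans (dom_antisymm h1 h2).symm)
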